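/- Let δ be any coloring of the ten 3-element subsets of {1,2,3,4,5} (equivalently of the points v_S ∈ Q₅ with |S| = 3). Suppose that (a) no two sets S, T with |S Δ T| = 2 (distance-1 pairs) receive the same color, and (b) no four sets forming a unit square in Q₅ receive four pairwise distinct colors. Then a contradiction follows; i.e., every such coloring admits either a monochromatic distance-1 pair or a rainbow unit square among the points {v_S : |S| = 3}. -/

import Mathlib

open scoped symmDiff

/-- For `S ⊆ Fin 5`, the point of `Q₅` with coordinate `1/√2` on `S` and `0` elsewhere. -/
noncomputable def vS (S : Finset (Fin 5)) : EuclideanSpace ℝ (Fin 5) :=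
  WithLp.toLp 2 (fun i => if i ∈ S then 1 / Real.sqrt 2 else 0)

lemma dist_vS (S T : Finset (Fin 5)) :
    dist (vS S) (vS T) = Real.sqrt ((S ∆ T).card / 2) := by
  rw [EuclideanSpace.dist_eq]
  congr 1
  have : ∀ i : Fin 5, dist (vS S i) (vS T i) ^ 2 = if i ∈ S ∆ T then (1:ℝ)/2 else 0 := by
    intro i
    have h2 : (0:ℝ) < Real.sqrt 2 := Real.sqrt_pos.2 (by norm_num)
    by_cases hS : i ∈ S <;> by_cases hT : i ∈ T <;>
      simp [vS, hS, hT, Finset.mem_symmDiff, Real.dist_eq, abs_of_pos, h2, div_pow,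
        Real.sq_sqrt (by norm_num : (2:ℝ) ≥ 0)] <;> norm_num
  rw [Finset.sum_congr rfl (fun i _ => this i)]
  rw [Finset.sum_ite_mem, Finset.univ_inter, Finset.sum_const, nsmul_eq_mul]
  ring

lemma dist_vS_one (S T : Finset (Fin 5)) (h : (S ∆ T).card = 2) :
    dist (vS S) (vS T) = 1 := by
  rw [dist_vS, h]; norm_num

lemma dist_vS_sqrt2 (S T : Finset (Fin 5)) (h : (S ∆ T).card = 4) :
    dist (vS S) (vS T) = Real.sqrt 2 := by
  rw [dist_vS, h]; norm_num

lemma key (C : Type*) (δ : Finset (Fin 5) → C)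
    (ha : ∀ S T : Finset (Fin 5), S.card = 3 → T.card = 3 → (S ∆ T).card = 2 → δ S ≠ δ T)
    (hb : ¬ ∃ S₁ S₂ S₃ S₄ : Finset (Fin 5),
      S₁.card = 3 ∧ S₂.card = 3 ∧ S₃.card = 3 ∧ S₄.card = 3 ∧
      dist (vS S₁) (vS S₂) = 1 ∧ dist (vS S₂) (vS S₃) = 1 ∧
      dist (vS S₃) (vS S₄) = 1 ∧ dist (vS S₄) (vS S₁) = 1 ∧
      dist (vS S₁) (vS S₃) = Real.sqrt 2 ∧ dist (vS S₂) (vS S₄) = Real.sqrt 2 ∧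
      δ S₁ ≠ δ S₂ ∧ δ S₁ ≠ δ S₃ ∧ δ S₁ ≠ δ S₄ ∧
      δ S₂ ≠ δ S₃ ∧ δ S₂ ≠ δ S₄ ∧ δ S₃ ≠ δ S₄)
    (S₁ S₂ S₃ S₄ : Finset (Fin 5))
    (c1 : S₁.card = 3) (c2 : S₂.card = 3) (c3 : S₃.card = 3) (c4 : S₄.card = 3)
    (e12 : (S₁ ∆ S₂).card = 2) (e23 : (S₂ ∆ S₃).card = 2)
    (e34 : (S₃ ∆ S₄).card = 2) (e41 : (S₄ ∆ S₁).card = 2)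
    (e13 : (S₁ ∆ S₃).card = 4) (e24 : (S₂ ∆ S₄).card = 4) :
    δ S₁ = δ S₃ ∨ δ S₂ = δ S₄ := by
  by_contra h
  push_neg at h
  obtain ⟨h13, h24⟩ := h
  exact hb ⟨S₁, S₂, S₃, S₄, c1, c2, c3, c4,
    dist_vS_one _ _ e12, dist_vS_one _ _ e23, dist_vS_one _ _ e34, dist_vS_one _ _ e41,
    dist_vS_sqrt2 _ _ e13, dist_vS_sqrt2 _ _ e24,
    ha _ _ c1 c2 e12, h13, Ne.symm (ha _ _ c4 c1 e41),
    ha _ _ c2 c3 e23, h24, ha _ _ c3 c4 e34⟩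

theorem stmt7 (C : Type*) (δ : Finset (Fin 5) → C)
    (ha : ∀ S T : Finset (Fin 5), S.card = 3 → T.card = 3 → (S ∆ T).card = 2 → δ S ≠ δ T)
    (hb : ¬ ∃ S₁ S₂ S₃ S₄ : Finset (Fin 5),
      S₁.card = 3 ∧ S₂.card = 3 ∧ S₃.card = 3 ∧ S₄.card = 3 ∧
      dist (vS S₁) (vS S₂) = 1 ∧ dist (vS S₂) (vS S₃) = 1 ∧
      dist (vS S₃) (vS S₄) = 1 ∧ dist (vS S₄) (vS S₁) = 1 ∧
      dist (vS S₁) (vS S₃) = Real.sqrt 2 ∧ dist (vS S₂) (vS S₄) = Real.sqrt 2 ∧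
      δ S₁ ≠ δ S₂ ∧ δ S₁ ≠ δ S₃ ∧ δ S₁ ≠ δ S₄ ∧
      δ S₂ ≠ δ S₃ ∧ δ S₂ ≠ δ S₄ ∧ δ S₃ ≠ δ S₄) :
    False := by
  have h0 := key C δ ha hb ({0,2,4} : Finset (Fin 5)) ({0,3,4} : Finset (Fin 5)) ({1,3,4} : Finset (Fin 5)) ({1,2,4} : Finset (Fin 5)) (by decide) (by decide) (by decide) (by decide) (by decide) (by decide) (by decide) (by decide) (by decide) (by decide)
  have h1 := key C δ ha hb ({0,1,2} : Finset (Fin 5)) ({0,2,4} : Finset (Fin 5)) ({2,3,4} : Finset (Fin 5)) ({1,2,3} : Finset (Fin 5)) (by decide) (by decide) (by decide) (by decide) (by decide) (by decide) (by decide) (by decide) (by decide) (by decide)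
  have h2 := key C δ ha hb ({0,1,3} : Finset (Fin 5)) ({0,1,2} : Finset (Fin 5)) ({0,2,4} : Finset (Fin 5)) ({0,3,4} : Finset (Fin 5)) (by decide) (by decide) (by decide) (by decide) (by decide) (by decide) (by decide) (by decide) (by decide) (by decide)
  have h3 := key C δ ha hb ({0,2,3} : Finset (Fin 5)) ({0,2,4} : Finset (Fin 5)) ({1,2,4} : Finset (Fin 5)) ({1,2,3} : Finset (Fin 5)) (by decide) (by decide) (by decide) (by decide) (by decide) (by decide) (by decide) (by decide) (by decide) (by decide)
  rcases h0 with h0 | h0 <;> rcases h1 with h1 | h1 <;> rcases h2 with h2 | h2 <;> rcases h3 with h3 | h3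
  exact ha ({1,3,4} : Finset (Fin 5)) ({0,1,3} : Finset (Fin 5)) (by decide) (by decide) (by decide) ((h0.symm).trans (h2.symm))
  exact ha ({1,3,4} : Finset (Fin 5)) ({0,1,3} : Finset (Fin 5)) (by decide) (by decide) (by decide) ((h0.symm).trans (h2.symm))
  exact ha ({2,3,4} : Finset (Fin 5)) ({0,3,4} : Finset (Fin 5)) (by decide) (by decide) (by decide) ((h1.symm).trans (h2))
  exact ha ({1,3,4} : Finset (Fin 5)) ({1,2,3} : Finset (Fin 5)) (by decide) (by decide) (by decide) ((h0.symm).trans (h3))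
  exact ha ({1,3,4} : Finset (Fin 5)) ({1,2,3} : Finset (Fin 5)) (by decide) (by decide) (by decide) ((h0.symm).trans (h1))
  exact ha ({1,3,4} : Finset (Fin 5)) ({1,2,3} : Finset (Fin 5)) (by decide) (by decide) (by decide) ((h0.symm).trans (h1))
  exact ha ({1,3,4} : Finset (Fin 5)) ({1,2,3} : Finset (Fin 5)) (by decide) (by decide) (by decide) ((h0.symm).trans (h1))
  exact ha ({1,3,4} : Finset (Fin 5)) ({1,2,3} : Finset (Fin 5)) (by decide) (by decide) (by decide) ((h0.symm).trans (h1))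
  exact ha ({0,3,4} : Finset (Fin 5)) ({0,2,3} : Finset (Fin 5)) (by decide) (by decide) (by decide) ((h0).trans (h3.symm))
  exact ha ({0,1,3} : Finset (Fin 5)) ({1,2,3} : Finset (Fin 5)) (by decide) (by decide) (by decide) ((h2).trans (h3))
  exact ha ({1,2,4} : Finset (Fin 5)) ({0,1,2} : Finset (Fin 5)) (by decide) (by decide) (by decide) ((h0.symm).trans (h2.symm))
  exact ha ({1,2,4} : Finset (Fin 5)) ({0,1,2} : Finset (Fin 5)) (by decide) (by decide) (by decide) ((h0.symm).trans (h2.symm))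
  exact ha ({0,3,4} : Finset (Fin 5)) ({0,2,3} : Finset (Fin 5)) (by decide) (by decide) (by decide) ((h0).trans (h3.symm))
  exact ha ({1,2,3} : Finset (Fin 5)) ({0,1,3} : Finset (Fin 5)) (by decide) (by decide) (by decide) ((h1.symm).trans (h2.symm))
  exact ha ({1,2,4} : Finset (Fin 5)) ({0,1,2} : Finset (Fin 5)) (by decide) (by decide) (by decide) ((h0.symm).trans (h2.symm))
  exact ha ({1,2,4} : Finset (Fin 5)) ({0,1,2} : Finset (Fin 5)) (by decide) (by decide) (by decide) ((h0.symm).trans (h2.symm))
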